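/- Let f : ℝ^d → ℝ be locally Lipschitz and assume hypotheses (H1)–(H6) of the setting, with C_M > 0. Define D₁ := μ/(8(μ+L)), D₂ := μ/2, C₁ := γ/4, C₂ := min{γ/(8C_a), min{1, 1/δ_A}/2}, δ_GI := min{δ_A/4, D₁/C_M}. Then for every a₁ ∈ (0, D₁], every a₂ ∈ (0, C₂], every x ∈ ball(x̄, δ_GI), and every σ > 0 such that either (Region I) (a₁/2)·dist(x, M) ≤ σ ≤ a₁·dist(x, M) and a₂²·‖P x − x̄‖² ≤ dist(x, M), or (Region II) (a₂/2)·‖P x − x̄‖ ≤ σ ≤ a₂·‖P x − x̄‖ and dist(x, M)/σ ≤ 2a₂·‖P x − x̄‖, every g ∈ ∂_σ f(x) satisfies σ·‖g‖ ≥ min{γa₂/(8·max{4La₂², β}), μa₁/(4·max{2L, β/a₂²})}·(f(x) − f(x̄)). -/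

import Mathlib

open Metric Set Filter
open scoped InnerProductSpace

abbrev Euc (d : ℕ) := EuclideanSpace ℝ (Fin d)

noncomputable def clarkeSubdiff {d : ℕ} (f : Euc d → ℝ) (x : Euc d) : Set (Euc d) :=
  convexHull ℝ {v | ∃ u : ℕ → Euc d,
    (∀ n, DifferentiableAt ℝ f (u n)) ∧
    Tendsto u atTop (nhds x) ∧
    Tendsto (fun n => gradient f (u n)) atTop (nhds v)}

noncomputable def goldsteinSubdiff {d : ℕ} (f : Euc d → ℝ) (σ : ℝ) (x : Euc d) : Set (Euc d) :=
  convexHull ℝ (⋃ y ∈ closedBall x σ, clarkeSubdiff f y)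

set_option maxHeartbeats 1000000
theorem stmt0 {d : ℕ}
    (f : Euc d → ℝ) (hf : LocallyLipschitz f)
    (xbar : Euc d) (M : Set (Euc d)) (hxbarM : xbar ∈ M)
    (δA L μ γ β Ca CM : ℝ)
    (hδA : 0 < δA) (hL : 0 < L) (hμ : 0 < μ) (hγ : 0 < γ) (hβ : 0 < β)
    (hCa : 0 < Ca) (hCM : 0 < CM)
    (P : Euc d → Euc d)
    (hP : ∀ z ∈ ball xbar (2*δA), P z ∈ M ∧ ‖z - P z‖ = Metric.infDist z M)
    (Tsp : Euc d → Submodule ℝ (Euc d)) (Q : Euc d → Euc d → Euc d)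
    (hQ : ∀ x ∈ ball xbar δA, ∀ v, Q x v = (Submodule.orthogonalProjectionOnto (Tsp x) v : Euc d))
    (G : Euc d → Euc d)
    (hG : ∀ x ∈ ball xbar δA, G x ∈ Tsp x)
    (H1 : ∀ x' ∈ ball xbar (2*δA), ∀ v ∈ clarkeSubdiff f x', ‖v‖ ≤ L)
    (H2 : ∀ x' ∈ ball xbar δA, ∀ v ∈ clarkeSubdiff f x',
      μ * Metric.infDist x' M ≤ ⟪ v, x' - P x' ⟫_ℝ)
    (H3 : ∀ x ∈ ball xbar δA, ∀ x' ∈ ball xbar (2*δA),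
      ‖P x' - P x - Q x (x' - x)‖ ≤ CM * (Metric.infDist x M ^ 2 + ‖x - x'‖ ^ 2))
    (H4 : ∀ x ∈ ball xbar δA, ∀ σ ∈ Icc (0:ℝ) δA, ∀ g ∈ goldsteinSubdiff f σ x,
      ‖Q x (g - G x)‖ ≤ Ca * (Metric.infDist x M + σ))
    (H5 : ∀ x ∈ ball xbar δA, γ/2 * ‖P x - xbar‖ ≤ ‖G x‖ ∧ ‖G x‖ ≤ β * ‖P x - xbar‖)
    (H6 : ∀ x ∈ ball xbar δA, f x - f xbar ≤ L * Metric.infDist x M + β/2 * ‖P x - xbar‖ ^ 2)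
    (D₁ D₂ C₁ C₂ δGI : ℝ)
    (hD₁ : D₁ = μ / (8*(μ+L)))
    (hD₂ : D₂ = μ/2)
    (hC₁ : C₁ = γ/4)
    (hC₂ : C₂ = min (γ/(8*Ca)) (min 1 (1/δA) / 2))
    (hδGI : δGI = min (δA/4) (D₁/CM))
    (a₁ a₂ : ℝ) (ha₁ : 0 < a₁ ∧ a₁ ≤ D₁) (ha₂ : 0 < a₂ ∧ a₂ ≤ C₂)
    (x : Euc d) (hx : x ∈ ball xbar δGI) (σ : ℝ) (hσ : 0 < σ)
    (hreg : (a₁/2 * Metric.infDist x M ≤ σ ∧ σ ≤ a₁ * Metric.infDist x M ∧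
             a₂^2 * ‖P x - xbar‖^2 ≤ Metric.infDist x M) ∨
            (a₂/2 * ‖P x - xbar‖ ≤ σ ∧ σ ≤ a₂ * ‖P x - xbar‖ ∧
             Metric.infDist x M / σ ≤ 2*a₂*‖P x - xbar‖))
    (g : Euc d) (hg : g ∈ goldsteinSubdiff f σ x) :
    min (γ*a₂/(8*max (4*L*a₂^2) β)) (μ*a₁/(4*max (2*L) (β/a₂^2))) * (f x - f xbar)
      ≤ σ * ‖g‖ := by
  obtain ⟨ha₁0, ha₁D⟩ := ha₁
  obtain ⟨ha₂0, ha₂C⟩ := ha₂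
  set D := Metric.infDist x M with hDdef
  set R := ‖P x - xbar‖ with hRdef
  have hD0 : 0 ≤ D := Metric.infDist_nonneg
  have hδGI4 : δGI ≤ δA / 4 := by rw [hδGI]; exact min_le_left _ _
  have hδGICM : δGI ≤ D₁ / CM := by rw [hδGI]; exact min_le_right _ _
  have hD₁pos : 0 < D₁ := lt_of_lt_of_le ha₁0 ha₁D
  have hD₁le : D₁ ≤ 1 / 8 := by
    rw [hD₁, div_le_div_iff₀ (by linarith) (by norm_num)]
    linarith only [hL, hμ]
  have hD₁' : 8 * (μ + L) * D₁ = μ := by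
    have hμL : (μ + L) ≠ 0 := by positivity
    rw [hD₁]; field_simp
  have hxd : dist x xbar < δGI := mem_ball.mp hx
  have hxdpos : 0 ≤ dist x xbar := dist_nonneg
  have hxballA : x ∈ ball xbar δA := by
    rw [mem_ball]; linarith only [hxd.trans_le hδGI4, hδA]
  have hxball2A : x ∈ ball xbar (2 * δA) := by
    rw [mem_ball]; linarith only [hxd.trans_le hδGI4, hδA]
  obtain ⟨hPxM, hPxnorm⟩ := hP x hxball2A
  have hDdist : D ≤ dist x xbar := Metric.infDist_le_dist_of_mem hxbarM
  have hDlt : D < δGI := lt_of_le_of_lt hDdist hxd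
  have hCMD : CM * D ≤ D₁ := by
    have h1 : D ≤ D₁ / CM := le_of_lt (hDlt.trans_le hδGICM)
    rw [le_div_iff₀ hCM] at h1; linarith only [h1, mul_comm D CM]
  have hRbound : R < δA / 2 := by
    have h1 : R ≤ ‖P x - x‖ + ‖x - xbar‖ := norm_sub_le_norm_sub_add_norm_sub _ _ _
    have h2 : ‖P x - x‖ = D := by rw [norm_sub_rev]; exact hPxnorm
    have h3 : D < δA / 4 := hDlt.trans_le hδGI4
    have h4 : ‖x - xbar‖ < δA / 4 := by
      rw [← dist_eq_norm]; exact hxd.trans_le hδGI4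
    linarith only [h1, h2, h3, h4]
  have ha₂C' : a₂ ≤ min (γ / (8 * Ca)) (min 1 (1 / δA) / 2) := hC₂ ▸ ha₂C
  have ha₂half : a₂ ≤ 1 / 2 := by
    have h1 := ha₂C'.trans (min_le_right _ _)
    have h2 : min 1 (1 / δA) ≤ 1 := min_le_left _ _
    linarith only [h1, h2]
  have ha₂δA : a₂ * δA ≤ 1 / 2 := by
    have h1 := ha₂C'.trans (min_le_right _ _)
    have h2 : min 1 (1 / δA) ≤ 1 / δA := min_le_right _ _
    have h3 : a₂ ≤ 1 / δA / 2 := by linarith only [h1, h2]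
    rw [div_div, le_div_iff₀ (by linarith : (0:ℝ) < δA * 2)] at h3
    linarith only [h3, mul_comm a₂ δA]
  have ha₂R : a₂ * R ≤ 1 / 4 := by
    have h1 : a₂ * R ≤ a₂ * (δA / 2) :=
      mul_le_mul_of_nonneg_left hRbound.le ha₂0.le
    linarith only [h1, ha₂δA]
  have ha₂Ca : a₂ ≤ γ / (8 * Ca) := ha₂C'.trans (min_le_left _ _)
  have hCaa₂ : Ca * a₂ ≤ γ / 8 := by
    rw [le_div_iff₀ (by linarith : (0:ℝ) < 8 * Ca)] at ha₂Ca
    linarith only [ha₂Ca]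
  set Mx₂ := max (4 * L * a₂ ^ 2) β with hMx₂
  set MxL := max (2 * L) (β / a₂ ^ 2) with hMxL
  have hMx₂pos : 0 < Mx₂ := lt_of_lt_of_le hβ (le_max_right _ _)
  have hMxLpos : 0 < MxL := lt_of_lt_of_le (by linarith) (le_max_left _ _)
  have hK1pos : 0 < γ * a₂ / (8 * Mx₂) :=
    div_pos (mul_pos hγ ha₂0) (by linarith)
  have hK2pos : 0 < μ * a₁ / (4 * MxL) :=
    div_pos (mul_pos hμ ha₁0) (by linarith)
  set K := min (γ * a₂ / (8 * Mx₂)) (μ * a₁ / (4 * MxL)) with hK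
  have hKpos : 0 < K := lt_min hK1pos hK2pos
  by_cases hgap : f x - f xbar ≤ 0
  · have h1 : K * (f x - f xbar) ≤ 0 := mul_nonpos_iff.mpr (Or.inl ⟨hKpos.le, hgap⟩)
    have h2 : 0 ≤ σ * ‖g‖ := mul_nonneg hσ.le (norm_nonneg g)
    linarith only [h1, h2]
  push_neg at hgap
  rcases hreg with ⟨hσl, hσu, hRD⟩ | ⟨hσl, hσu, hDσ⟩
  · -- Region I
    have hDpos : 0 < D := by
      by_contra hc
      push_neg at hc
      have h1 : 0 < a₁ * D := hσ.trans_le hσu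
      have h2 : a₁ * D ≤ 0 := mul_nonpos_iff.mpr (Or.inl ⟨ha₁0.le, hc⟩)
      linarith only [h1, h2]
    have hσle : σ ≤ D₁ * D := by
      have h1 : a₁ * D ≤ D₁ * D := mul_le_mul_of_nonneg_right ha₁D hD0
      linarith only [hσu, h1]
    have hσD : σ ≤ D := by
      have h1 : D₁ * D ≤ (1 / 8) * D := mul_le_mul_of_nonneg_right hD₁le hD0
      linarith only [hσle, h1, hD0]
    have hσδ : σ < δA / 4 := hσD.trans_lt (hDlt.trans_le hδGI4)
    -- key estimate for all Clarke subgradients near x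
    have hkey : ∀ y ∈ closedBall x σ, ∀ v ∈ clarkeSubdiff f y,
        μ / 2 * D ≤ ⟪v, x - P x⟫_ℝ := by
      intro y hy v hv
      have hyx : dist y x ≤ σ := mem_closedBall.mp hy
      have hyA : y ∈ ball xbar δA := by
        rw [mem_ball]
        calc dist y xbar ≤ dist y x + dist x xbar := dist_triangle _ _ _
          _ < σ + δGI := by linarith only [hyx, hxd]
          _ ≤ δA := by linarith only [hσδ, hδGI4, hδA]
      have hy2A : y ∈ ball xbar (2 * δA) := by
        rw [mem_ball]; rw [mem_ball] at hyA; linarith only [hyA, hδA]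
      have hvL : ‖v‖ ≤ L := H1 y hy2A v hv
      have hH2y := H2 y hyA v hv
      have hH3y := H3 x hxballA y hy2A
      have hxy : ‖x - y‖ ≤ σ := by rw [← dist_eq_norm, dist_comm]; exact hyx
      have hyxn : ‖y - x‖ ≤ σ := by rw [← dist_eq_norm]; exact hyx
      have hQnorm : ‖Q x (y - x)‖ ≤ ‖y - x‖ := by
        rw [hQ x hxballA]
        have h1 : ‖Submodule.orthogonalProjectionOnto (Tsp x) (y - x)‖
            ≤ ‖Submodule.orthogonalProjectionOnto (Tsp x)‖ * ‖y - x‖ :=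
          (Submodule.orthogonalProjectionOnto (Tsp x)).le_opNorm _
        have h2 : ‖Submodule.orthogonalProjectionOnto (Tsp x)‖ ≤ 1 := Submodule.orthogonalProjectionOnto_norm_le _
        calc ‖((Submodule.orthogonalProjectionOnto (Tsp x) (y - x) : Tsp x) : Euc d)‖
            = ‖Submodule.orthogonalProjectionOnto (Tsp x) (y - x)‖ := rfl
          _ ≤ ‖Submodule.orthogonalProjectionOnto (Tsp x)‖ * ‖y - x‖ := h1
          _ ≤ 1 * ‖y - x‖ := mul_le_mul_of_nonneg_right h2 (norm_nonneg _)
          _ = ‖y - x‖ := one_mul _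
      have hdy : D - σ ≤ Metric.infDist y M := by
        have h1 : D ≤ Metric.infDist y M + dist x y :=
          Metric.infDist_le_infDist_add_dist
        have h2 : dist x y ≤ σ := by rw [dist_comm]; exact hyx
        linarith only [h1, h2]
      have hxy2 : ‖x - y‖ ^ 2 ≤ σ ^ 2 := pow_le_pow_left₀ (norm_nonneg _) hxy 2
      have hPyPx : ‖P y - P x‖ ≤ σ + CM * (D ^ 2 + σ ^ 2) := by
        have h1 : ‖P y - P x‖ ≤ ‖P y - P x - Q x (y - x)‖ + ‖Q x (y - x)‖ := by
          have := norm_add_le (P y - P x - Q x (y - x)) (Q x (y - x))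
          simpa using this
        have h2 : CM * ‖x - y‖ ^ 2 ≤ CM * σ ^ 2 :=
          mul_le_mul_of_nonneg_left hxy2 hCM.le
        have h3 := hH3y
        linarith only [h1, h2, h3, hQnorm, hyxn]
      have hsplit : ⟪v, x - P x⟫_ℝ
          = ⟪v, y - P y⟫_ℝ + ⟪v, x - y⟫_ℝ + ⟪v, P y - P x⟫_ℝ := by
        have h : x - P x = (y - P y) + ((x - y) + (P y - P x)) := by abel
        rw [h, inner_add_right, inner_add_right]; ring
      have hb1 : -(L * σ) ≤ ⟪v, x - y⟫_ℝ := by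
        have h1 := abs_real_inner_le_norm v (x - y)
        have h2 : ‖v‖ * ‖x - y‖ ≤ L * σ :=
          mul_le_mul hvL hxy (norm_nonneg _) hL.le
        have h3 := neg_abs_le (⟪v, x - y⟫_ℝ)
        linarith only [h1, h2, h3]
      have hb2 : -(L * (σ + CM * (D ^ 2 + σ ^ 2))) ≤ ⟪v, P y - P x⟫_ℝ := by
        have h1 := abs_real_inner_le_norm v (P y - P x)
        have h2 : ‖v‖ * ‖P y - P x‖ ≤ L * (σ + CM * (D ^ 2 + σ ^ 2)) :=
          mul_le_mul hvL hPyPx (norm_nonneg _) hL.le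
        have h3 := neg_abs_le (⟪v, P y - P x⟫_ℝ)
        linarith only [h1, h2, h3]
      have hLD₁ : L * D₁ ≤ μ / 8 := by
        have h1 : 0 ≤ μ * D₁ := mul_nonneg hμ.le hD₁pos.le
        linarith only [hD₁', h1]
      have hH2y' : μ * (D - σ) ≤ ⟪v, y - P y⟫_ℝ := by
        have h1 : μ * (D - σ) ≤ μ * Metric.infDist y M :=
          mul_le_mul_of_nonneg_left hdy hμ.le
        linarith only [h1, hH2y]
      -- arithmetic
      have he0 : μ / 4 * D = 2 * (μ + L) * D₁ * D := by
        rw [hD₁]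
        have hμL : (μ + L) ≠ 0 := by positivity
        field_simp; ring
      have he1 : (μ + 2 * L) * σ ≤ (μ + 2 * L) * (D₁ * D) :=
        mul_le_mul_of_nonneg_left hσle (by linarith)
      have he2 : (μ + 2 * L) * (D₁ * D) ≤ 2 * (μ + L) * (D₁ * D) :=
        mul_le_mul_of_nonneg_right (by linarith) (mul_nonneg hD₁pos.le hD0)
      have hs1 : σ ^ 2 ≤ D ^ 2 := pow_le_pow_left₀ hσ.le hσD 2
      have hs2 : CM * σ ^ 2 ≤ CM * D ^ 2 := mul_le_mul_of_nonneg_left hs1 hCM.le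
      have hs3 : (CM * D) * D ≤ D₁ * D := mul_le_mul_of_nonneg_right hCMD hD0
      have hs4 : CM * (D ^ 2 + σ ^ 2) ≤ 2 * (D₁ * D) := by linarith only [hs2, hs3]
      have hs5 : L * (CM * (D ^ 2 + σ ^ 2)) ≤ L * (2 * (D₁ * D)) :=
        mul_le_mul_of_nonneg_left hs4 hL.le
      have hs6 : (L * D₁) * D ≤ (μ / 8) * D := mul_le_mul_of_nonneg_right hLD₁ hD0
      calc μ / 2 * D
          ≤ μ * (D - σ) - L * σ - L * (σ + CM * (D ^ 2 + σ ^ 2)) := by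
            linarith only [he0, he1, he2, hs5, hs6]
        _ ≤ ⟪v, y - P y⟫_ℝ + ⟪v, x - y⟫_ℝ + ⟪v, P y - P x⟫_ℝ := by
            linarith only [hH2y', hb1, hb2]
        _ = ⟪v, x - P x⟫_ℝ := hsplit.symm
    have hginner : μ / 2 * D ≤ ⟪g, x - P x⟫_ℝ := by
      have hsub : goldsteinSubdiff f σ x ⊆ {w | μ / 2 * D ≤ ⟪w, x - P x⟫_ℝ} := by
        apply convexHull_min
        · rintro v hv
          simp only [mem_iUnion] at hv
          obtain ⟨y, hy, hv⟩ := hv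
          exact hkey y hy v hv
        · have hlin : IsLinearMap ℝ (fun w : Euc d => ⟪w, x - P x⟫_ℝ) :=
            ⟨fun a b => inner_add_left a b (x - P x),
             fun c a => real_inner_smul_left a (x - P x) c⟩
          exact convex_halfSpace_ge hlin _
      exact hsub hg
    have hgnorm : μ / 2 ≤ ‖g‖ := by
      have h1 : ⟪g, x - P x⟫_ℝ ≤ ‖g‖ * ‖x - P x‖ := real_inner_le_norm _ _
      rw [hPxnorm] at h1
      have h2 : μ / 2 * D ≤ ‖g‖ * D := by linarith only [h1, hginner]
      exact le_of_mul_le_mul_right h2 hDpos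
    have hgapb : f x - f xbar ≤ MxL * D := by
      have h6 := H6 x hxballA
      set m := β / a₂ ^ 2 with hm
      have hmβ : β = m * a₂ ^ 2 := by rw [hm]; field_simp
      have hmpos : 0 < m := div_pos hβ (pow_pos ha₂0 2)
      have h2L : 2 * L ≤ MxL := le_max_left _ _
      have hmM : m ≤ MxL := le_max_right _ _
      have hR2 : β / 2 * R ^ 2 = m / 2 * (a₂ ^ 2 * R ^ 2) := by rw [hmβ]; ring
      have hstep : m / 2 * (a₂ ^ 2 * R ^ 2) ≤ m / 2 * D :=
        mul_le_mul_of_nonneg_left hRD (by linarith)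
      have hLD : L * D ≤ MxL / 2 * D :=
        mul_le_mul_of_nonneg_right (by linarith) hD0
      have hmD : m / 2 * D ≤ MxL / 2 * D :=
        mul_le_mul_of_nonneg_right (by linarith) hD0
      linarith only [h6, hR2, hstep, hLD, hmD]
    have hfinal : μ * a₁ / 4 * D ≤ σ * ‖g‖ := by
      have h1 : (a₁ / 2 * D) * (μ / 2) ≤ σ * ‖g‖ :=
        mul_le_mul hσl hgnorm (by linarith) hσ.le
      linarith only [h1]
    calc K * (f x - f xbar) ≤ μ * a₁ / (4 * MxL) * (f x - f xbar) :=
          mul_le_mul_of_nonneg_right (min_le_right _ _) hgap.le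
      _ ≤ μ * a₁ / (4 * MxL) * (MxL * D) :=
          mul_le_mul_of_nonneg_left hgapb hK2pos.le
      _ = μ * a₁ / 4 * D := by
          field_simp
      _ ≤ σ * ‖g‖ := hfinal
  · -- Region II
    have hRpos : 0 < R := by
      by_contra hc
      push_neg at hc
      have h1 : 0 < a₂ * R := hσ.trans_le hσu
      have h2 : a₂ * R ≤ 0 := mul_nonpos_iff.mpr (Or.inl ⟨ha₂0.le, hc⟩)
      linarith only [h1, h2]
    have hσδA2 : σ ≤ δA := by
      have h1 : a₂ * R ≤ (1 / 2) * R := mul_le_mul_of_nonneg_right ha₂half hRpos.le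
      linarith only [hσu, h1, hRbound, hδA]
    have hDbound : D ≤ 2 * a₂ ^ 2 * R ^ 2 := by
      have h1 : D ≤ 2 * a₂ * R * σ := by
        rw [div_le_iff₀ hσ] at hDσ; linarith only [hDσ]
      have h2 : 2 * a₂ * R * σ ≤ 2 * a₂ * R * (a₂ * R) := by
        have h0 : (0:ℝ) ≤ 2 * a₂ * R := by
          have := mul_nonneg ha₂0.le hRpos.le
          linarith only [this]
        exact mul_le_mul_of_nonneg_left hσu h0
      linarith only [h1, h2]
    have hH4x := H4 x hxballA σ ⟨hσ.le, hσδA2⟩ g hg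
    have hGmem := hG x hxballA
    obtain ⟨hG5l, hG5u⟩ := H5 x hxballA
    have hQg : Q x (g - G x) = (Submodule.orthogonalProjectionOnto (Tsp x) g : Euc d) - G x := by
      rw [hQ x hxballA, map_sub]
      push_cast
      rw [show ((Submodule.orthogonalProjectionOnto (Tsp x) (G x) : Tsp x) : Euc d) = G x from Submodule.starProjection_eq_self_iff.mpr hGmem]
    have hinner : ⟪g, G x⟫_ℝ
        = ⟪((Submodule.orthogonalProjectionOnto (Tsp x) g : Tsp x) : Euc d), G x⟫_ℝ := by
      have h0 : ⟪g - Submodule.orthogonalProjectionOnto (Tsp x) g, G x⟫_ℝ = 0 :=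
        Submodule.starProjection_inner_eq_zero g (G x) hGmem
      rw [inner_sub_left] at h0
      linarith only [h0]
    have hlow : ‖G x‖ ^ 2 - Ca * (D + σ) * ‖G x‖ ≤ ⟪g, G x⟫_ℝ := by
      rw [hinner]
      have hdec : ((Submodule.orthogonalProjectionOnto (Tsp x) g : Tsp x) : Euc d)
          = (((Submodule.orthogonalProjectionOnto (Tsp x) g : Tsp x) : Euc d) - G x) + G x := by abel
      rw [hdec, inner_add_left, real_inner_self_eq_norm_sq]
      have h1 := abs_real_inner_le_norm
        ((((Submodule.orthogonalProjectionOnto (Tsp x) g : Tsp x) : Euc d)) - G x) (G x)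
      have h2 : ‖(((Submodule.orthogonalProjectionOnto (Tsp x) g : Tsp x) : Euc d)) - G x‖
          ≤ Ca * (D + σ) := by rw [← hQg]; exact hH4x
      have h3 : ‖(((Submodule.orthogonalProjectionOnto (Tsp x) g : Tsp x) : Euc d)) - G x‖ * ‖G x‖
          ≤ Ca * (D + σ) * ‖G x‖ :=
        mul_le_mul_of_nonneg_right h2 (norm_nonneg _)
      have h4 := neg_abs_le
        (⟪(((Submodule.orthogonalProjectionOnto (Tsp x) g : Tsp x) : Euc d)) - G x, G x⟫_ℝ)
      linarith only [h1, h3, h4]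
    have hGxpos : 0 < ‖G x‖ :=
      lt_of_lt_of_le (mul_pos (by linarith : (0:ℝ) < γ / 2) hRpos) hG5l
    have hgGx : ‖G x‖ - Ca * (D + σ) ≤ ‖g‖ := by
      have h1 : ⟪g, G x⟫_ℝ ≤ ‖g‖ * ‖G x‖ := real_inner_le_norm _ _
      have h2 : (‖G x‖ - Ca * (D + σ)) * ‖G x‖ ≤ ‖g‖ * ‖G x‖ := by
        linarith only [hlow, h1]
      exact le_of_mul_le_mul_right h2 hGxpos
    have hc1 : Ca * σ ≤ γ / 8 * R := by
      have h1 : Ca * σ ≤ Ca * (a₂ * R) := mul_le_mul_of_nonneg_left hσu hCa.le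
      have h2 : (Ca * a₂) * R ≤ (γ / 8) * R :=
        mul_le_mul_of_nonneg_right hCaa₂ hRpos.le
      linarith only [h1, h2]
    have hc2 : Ca * D ≤ γ / 16 * R := by
      have h1 : Ca * D ≤ Ca * (2 * a₂ ^ 2 * R ^ 2) :=
        mul_le_mul_of_nonneg_left hDbound hCa.le
      have t1 : (Ca * a₂) * (a₂ * R) ≤ (γ / 8) * (1 / 4) :=
        mul_le_mul hCaa₂ ha₂R (mul_nonneg ha₂0.le hRpos.le) (by linarith)
      have t2 : (Ca * a₂) * (a₂ * R) * R ≤ (γ / 8) * (1 / 4) * R :=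
        mul_le_mul_of_nonneg_right t1 hRpos.le
      linarith only [h1, t2]
    have hgL : γ / 4 * R ≤ ‖g‖ := by
      have hgR : 0 ≤ γ * R := mul_nonneg hγ.le hRpos.le
      linarith only [hgGx, hG5l, hc1, hc2, hgR]
    have hgapb : f x - f xbar ≤ Mx₂ * R ^ 2 := by
      have h6 := H6 x hxballA
      have h4L : 4 * L * a₂ ^ 2 ≤ Mx₂ := le_max_left _ _
      have hβM : β ≤ Mx₂ := le_max_right _ _
      have hDb2 : L * D ≤ L * (2 * a₂ ^ 2 * R ^ 2) :=
        mul_le_mul_of_nonneg_left hDbound hL.le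
      have t1 : 4 * L * a₂ ^ 2 * R ^ 2 ≤ Mx₂ * R ^ 2 :=
        mul_le_mul_of_nonneg_right h4L (sq_nonneg R)
      have t2 : β * R ^ 2 ≤ Mx₂ * R ^ 2 :=
        mul_le_mul_of_nonneg_right hβM (sq_nonneg R)
      linarith only [h6, hDb2, t1, t2]
    have hfinal : γ * a₂ / 8 * R ^ 2 ≤ σ * ‖g‖ := by
      have h1 : (a₂ / 2 * R) * (γ / 4 * R) ≤ σ * ‖g‖ :=
        mul_le_mul hσl hgL (mul_nonneg (by linarith) hRpos.le) hσ.le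
      linarith only [h1]
    calc K * (f x - f xbar) ≤ γ * a₂ / (8 * Mx₂) * (f x - f xbar) :=
          mul_le_mul_of_nonneg_right (min_le_left _ _) hgap.le
      _ ≤ γ * a₂ / (8 * Mx₂) * (Mx₂ * R ^ 2) :=
          mul_le_mul_of_nonneg_left hgapb hK1pos.le
      _ = γ * a₂ / 8 * R ^ 2 := by
          field_simp
      _ ≤ σ * ‖g‖ := hfinal
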